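/- Let n ∈ ℕ and D ∈ HS^n_k(A,C). Let P_D be the free C-module with basis e_0,…,e_n, endowed with the A-module structure determined by a·(Σ_i c_i e_i) = Σ_i c_i·(Σ_{j=0}^i D_{i-j}(a)·e_j); this is a well-defined A-module structure commuting with the C-action. Then for every A-module M and every C-module N there is a bijection HS^n_D(M,N) ≃ Hom_C(M ⊗_A P_D, N), natural in N; i.e., the functor N ↦ HS^n_D(M,N) from C-modules to sets is represented by the C-module M ⊗_A P_D. -/

import Mathlib

open TensorProduct

universe w

/-- A higher derivation of order `n` from `A` to `C` over `k`. -/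
def IsHSDeriv (k : Type*) {A C : Type*} [CommRing k] [CommRing A] [CommRing C]
    [Algebra k A] [Algebra k C] (n : ℕ) (D : Fin (n + 1) → (A →ₗ[k] C)) : Prop :=
  D 0 1 = 1 ∧
    ∀ (i : Fin (n + 1)) (a b : A),
      D i (a * b) =
        ∑ p : Fin (n + 1), ∑ q : Fin (n + 1),
          if (p : ℕ) + (q : ℕ) = (i : ℕ) then D p a * D q b else 0

section Aux

variable {n : ℕ}

/-- Collapse the double "convolution" sum to a single sum. -/
lemma pair_sum {β : Type*} [AddCommMonoid β] (i : Fin (n + 1))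
    (f : Fin (n + 1) → Fin (n + 1) → β) :
    (∑ p : Fin (n + 1), ∑ q : Fin (n + 1),
      if (p : ℕ) + (q : ℕ) = (i : ℕ) then f p q else 0) =
    ∑ j : Fin (n + 1), if (j : ℕ) ≤ (i : ℕ) then
        f ⟨(i : ℕ) - (j : ℕ), Nat.lt_of_le_of_lt (Nat.sub_le _ _) i.isLt⟩ j else 0 := by
  rw [Finset.sum_comm]
  refine Finset.sum_congr rfl fun q _ => ?_
  by_cases hq : (q : ℕ) ≤ (i : ℕ)
  · rw [if_pos hq,
      Finset.sum_eq_single (⟨(i : ℕ) - (q : ℕ),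
        Nat.lt_of_le_of_lt (Nat.sub_le _ _) i.isLt⟩ : Fin (n + 1))]
    · rw [if_pos (by simp [Nat.sub_add_cancel hq])]
    · intro p _ hp
      rw [if_neg]
      intro h
      exact hp (Fin.ext (by simp; omega))
    · simp
  · rw [if_neg hq, Finset.sum_eq_zero]
    intro p _
    rw [if_neg]
    omega

variable {k A C : Type*} [CommRing k] [CommRing A] [CommRing C]
  [Algebra k A] [Algebra k C] {D : Fin (n + 1) → (A →ₗ[k] C)}

lemma D_one (hD : IsHSDeriv k n D) (i : Fin (n + 1)) (hi : (i : ℕ) ≠ 0) :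
    D i 1 = 0 := by
  suffices H : ∀ m : ℕ, ∀ i : Fin (n + 1), (i : ℕ) = m → (i : ℕ) ≠ 0 → D i 1 = 0 from
    H (i : ℕ) i rfl hi
  clear hi i
  intro m
  induction m using Nat.strong_induction_on with
  | _ m IH =>
  intro i hm hi
  subst hm
  have h := hD.2 i 1 1
  rw [mul_one, pair_sum] at h
  have h0i : (0 : Fin (n + 1)) ≠ i := by
    intro e
    exact hi (by simp [← e])
  rw [← Finset.sum_subset (Finset.subset_univ ({0, i} : Finset (Fin (n + 1))))
    ?_, Finset.sum_pair h0i] at h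
  · have e1 : (if ((0 : Fin (n+1)) : ℕ) ≤ (i : ℕ) then
        D ⟨(i : ℕ) - ((0 : Fin (n+1)) : ℕ), Nat.lt_of_le_of_lt (Nat.sub_le _ _) i.isLt⟩ 1 *
          D 0 1 else 0) = D i 1 := by
      rw [if_pos (by simp)]
      have : (⟨(i : ℕ) - ((0 : Fin (n+1)) : ℕ), Nat.lt_of_le_of_lt (Nat.sub_le _ _) i.isLt⟩ :
          Fin (n+1)) = i := Fin.ext (by simp)
      rw [this, hD.1, mul_one]
    have e2 : (if ((i : Fin (n+1)) : ℕ) ≤ (i : ℕ) then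
        D ⟨(i : ℕ) - (i : ℕ), Nat.lt_of_le_of_lt (Nat.sub_le _ _) i.isLt⟩ 1 *
          D i 1 else 0) = D i 1 := by
      rw [if_pos le_rfl]
      have : (⟨(i : ℕ) - (i : ℕ), Nat.lt_of_le_of_lt (Nat.sub_le _ _) i.isLt⟩ :
          Fin (n+1)) = 0 := Fin.ext (by simp)
      rw [this, hD.1, one_mul]
    rw [e1, e2] at h
    rwa [left_eq_add] at h
  · intro j _ hj
    simp only [Finset.mem_insert, Finset.mem_singleton, not_or] at hj
    by_cases hji : (j : ℕ) ≤ (i : ℕ)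
    · rw [if_pos hji]
      have hjlt : (j : ℕ) < (i : ℕ) :=
        lt_of_le_of_ne hji (fun e => hj.2 (Fin.ext e))
      have hj0 : (j : ℕ) ≠ 0 := fun e => hj.1 (Fin.ext (by simp [e]))
      rw [IH (j : ℕ) hjlt j rfl hj0, mul_zero]
    · rw [if_neg hji]

end Aux
section Main

variable {k A C : Type*} [CommRing k] [CommRing A] [CommRing C]
  [Algebra k A] [Algebra k C] {n : ℕ} {D : Fin (n + 1) → (A →ₗ[k] C)}
  {P : Type*} [AddCommGroup P] [Module C P] [Module A P] [SMulCommClass A C P]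
  {M : Type*} [AddCommGroup M] [Module A M] [Module k M] [IsScalarTower k A M]
  {N : Type w} [AddCommGroup N] [Module C N] [Module k N] [IsScalarTower k C N]

/-- The bilinear (additive) map underlying the forward direction. -/
noncomputable def Fbil (b : Module.Basis (Fin (n + 1)) C P) (Δ : Fin (n + 1) → (M →ₗ[k] N)) :
    P →+ M →+ N where
  toFun p :=
    { toFun := fun m => ∑ j : Fin (n + 1), b.repr p j • Δ j m
      map_zero' := by simp
      map_add' := fun x y => by
        simp [smul_add, Finset.sum_add_distrib] }
  map_zero' := by
    ext m; simp
  map_add' x y := by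
    ext m; simp [add_smul, Finset.sum_add_distrib]

lemma Fbil_apply (b : Module.Basis (Fin (n + 1)) C P) (Δ : Fin (n + 1) → (M →ₗ[k] N))
    (p : P) (m : M) :
    Fbil b Δ p m = ∑ j : Fin (n + 1), b.repr p j • Δ j m := rfl

lemma Fbil_smul (b : Module.Basis (Fin (n + 1)) C P) (Δ : Fin (n + 1) → (M →ₗ[k] N))
    (c : C) (p : P) (m : M) :
    Fbil b Δ (c • p) m = c • Fbil b Δ p m := by
  simp [Fbil_apply, Finset.smul_sum, mul_smul]

lemma Fbil_basis (b : Module.Basis (Fin (n + 1)) C P) (Δ : Fin (n + 1) → (M →ₗ[k] N))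
    (j : Fin (n + 1)) (m : M) :
    Fbil b Δ (b j) m = Δ j m := by
  simp [Fbil_apply, Module.Basis.repr_self, Finsupp.single_apply, ite_smul]

lemma Fbil_balanced (b : Module.Basis (Fin (n + 1)) C P)
    (hsmul : ∀ (a : A) (i : Fin (n + 1)),
      a • b i = ∑ j : Fin (n + 1),
        (if (j : ℕ) ≤ (i : ℕ) then
          D ⟨(i : ℕ) - (j : ℕ), Nat.lt_of_le_of_lt (Nat.sub_le _ _) i.isLt⟩ a
        else 0) • b j)
    (Δ : Fin (n + 1) → (M →ₗ[k] N))
    (hΔ : ∀ (i : Fin (n + 1)) (a : A) (m : M),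
      Δ i (a • m) =
        ∑ p : Fin (n + 1), ∑ q : Fin (n + 1),
          if (p : ℕ) + (q : ℕ) = (i : ℕ) then D p a • Δ q m else 0)
    (a : A) (p : P) (m : M) :
    Fbil b Δ (a • p) m = Fbil b Δ p (a • m) := by
  have key : ∀ (i : Fin (n + 1)), Fbil b Δ (a • b i) m = Fbil b Δ (b i) (a • m) := by
    intro i
    rw [hsmul a i, Fbil_apply, Module.Basis.repr_sum_self, Fbil_basis, hΔ, pair_sum]
    refine Finset.sum_congr rfl fun j _ => ?_
    rw [ite_smul, zero_smul]
  calc Fbil b Δ (a • p) m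
      = Fbil b Δ (a • ∑ i : Fin (n + 1), b.repr p i • b i) m := by rw [b.sum_repr p]
    _ = ∑ i : Fin (n + 1), b.repr p i • Fbil b Δ (a • b i) m := by
        rw [Finset.smul_sum]
        simp_rw [smul_comm a]
        rw [map_sum, AddMonoidHom.finset_sum_apply]
        exact Finset.sum_congr rfl fun i _ => Fbil_smul b Δ _ _ _
    _ = ∑ i : Fin (n + 1), b.repr p i • Fbil b Δ (b i) (a • m) := by
        exact Finset.sum_congr rfl fun i _ => congrArg _ (key i)
    _ = Fbil b Δ (∑ i : Fin (n + 1), b.repr p i • b i) (a • m) := by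
        rw [map_sum, AddMonoidHom.finset_sum_apply]
        exact (Finset.sum_congr rfl fun i _ => Fbil_smul b Δ _ _ _).symm
    _ = Fbil b Δ p (a • m) := by rw [b.sum_repr p]

end Main
section Main2

variable {k A C : Type*} [CommRing k] [CommRing A] [CommRing C]
  [Algebra k A] [Algebra k C] {n : ℕ} {D : Fin (n + 1) → (A →ₗ[k] C)}
  {P : Type*} [AddCommGroup P] [Module C P] [Module A P] [SMulCommClass A C P]
  {M : Type*} [AddCommGroup M] [Module A M] [Module k M] [IsScalarTower k A M]
  {N : Type w} [AddCommGroup N] [Module C N] [Module k N] [IsScalarTower k C N]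

/-- The forward direction: from a higher derivation over `D` to a `C`-linear map. -/
noncomputable def fwd (b : Module.Basis (Fin (n + 1)) C P)
    (hsmul : ∀ (a : A) (i : Fin (n + 1)),
      a • b i = ∑ j : Fin (n + 1),
        (if (j : ℕ) ≤ (i : ℕ) then
          D ⟨(i : ℕ) - (j : ℕ), Nat.lt_of_le_of_lt (Nat.sub_le _ _) i.isLt⟩ a
        else 0) • b j)
    (Δ : Fin (n + 1) → (M →ₗ[k] N))
    (hΔ : ∀ (i : Fin (n + 1)) (a : A) (m : M),
      Δ i (a • m) =
        ∑ p : Fin (n + 1), ∑ q : Fin (n + 1),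
          if (p : ℕ) + (q : ℕ) = (i : ℕ) then D p a • Δ q m else 0) :
    P ⊗[A] M →ₗ[C] N where
  toFun := TensorProduct.liftAddHom (Fbil b Δ) (Fbil_balanced b hsmul Δ hΔ)
  map_add' := map_add _
  map_smul' c x := by
    induction x using TensorProduct.induction_on with
    | zero => simp
    | tmul p m =>
        rw [smul_tmul']
        simp only [RingHom.id_apply, TensorProduct.liftAddHom_tmul]
        exact Fbil_smul b Δ c p m
    | add x y hx hy =>
        simp only [smul_add, map_add, RingHom.id_apply] at *
        rw [hx, hy]

lemma fwd_tmul (b : Module.Basis (Fin (n + 1)) C P)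
    (hsmul : ∀ (a : A) (i : Fin (n + 1)),
      a • b i = ∑ j : Fin (n + 1),
        (if (j : ℕ) ≤ (i : ℕ) then
          D ⟨(i : ℕ) - (j : ℕ), Nat.lt_of_le_of_lt (Nat.sub_le _ _) i.isLt⟩ a
        else 0) • b j)
    (Δ : Fin (n + 1) → (M →ₗ[k] N))
    (hΔ : ∀ (i : Fin (n + 1)) (a : A) (m : M),
      Δ i (a • m) =
        ∑ p : Fin (n + 1), ∑ q : Fin (n + 1),
          if (p : ℕ) + (q : ℕ) = (i : ℕ) then D p a • Δ q m else 0)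
    (p : P) (m : M) :
    fwd b hsmul Δ hΔ (p ⊗ₜ[A] m) = Fbil b Δ p m := rfl

/-- The backward direction. -/
noncomputable def bwd (hD : IsHSDeriv k n D) (b : Module.Basis (Fin (n + 1)) C P)
    (hsmul : ∀ (a : A) (i : Fin (n + 1)),
      a • b i = ∑ j : Fin (n + 1),
        (if (j : ℕ) ≤ (i : ℕ) then
          D ⟨(i : ℕ) - (j : ℕ), Nat.lt_of_le_of_lt (Nat.sub_le _ _) i.isLt⟩ a
        else 0) • b j)
    (φ : P ⊗[A] M →ₗ[C] N) (j : Fin (n + 1)) : M →ₗ[k] N where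
  toFun m := φ (b j ⊗ₜ[A] m)
  map_add' x y := by simp [TensorProduct.tmul_add]
  map_smul' r m := by
    simp only [RingHom.id_apply]
    rw [← algebraMap_smul A r m, ← TensorProduct.smul_tmul, hsmul,
      TensorProduct.sum_tmul]
    simp only [← TensorProduct.smul_tmul', map_sum, map_smul]
    rw [Finset.sum_eq_single j]
    · rw [if_pos le_rfl]
      have h0 : (⟨(j : ℕ) - (j : ℕ), Nat.lt_of_le_of_lt (Nat.sub_le _ _) j.isLt⟩ :
          Fin (n + 1)) = 0 := Fin.ext (by simp)
      have hmap : D 0 (algebraMap k A r) = algebraMap k C r := by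
        rw [Algebra.algebraMap_eq_smul_one, map_smul, hD.1,
          ← Algebra.algebraMap_eq_smul_one]
      rw [h0, hmap, algebraMap_smul]
    · intro j' _ hj'
      by_cases hle : (j' : ℕ) ≤ (j : ℕ)
      · rw [if_pos hle, Algebra.algebraMap_eq_smul_one, map_smul,
          D_one hD _ (by simp; omega), smul_zero, zero_smul]
      · rw [if_neg hle, zero_smul]
    · simp

lemma bwd_prop (hD : IsHSDeriv k n D) (b : Module.Basis (Fin (n + 1)) C P)
    (hsmul : ∀ (a : A) (i : Fin (n + 1)),
      a • b i = ∑ j : Fin (n + 1),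
        (if (j : ℕ) ≤ (i : ℕ) then
          D ⟨(i : ℕ) - (j : ℕ), Nat.lt_of_le_of_lt (Nat.sub_le _ _) i.isLt⟩ a
        else 0) • b j)
    (φ : P ⊗[A] M →ₗ[C] N) :
    ∀ (i : Fin (n + 1)) (a : A) (m : M),
      bwd hD b hsmul φ i (a • m) =
        ∑ p : Fin (n + 1), ∑ q : Fin (n + 1),
          if (p : ℕ) + (q : ℕ) = (i : ℕ) then D p a • bwd hD b hsmul φ q m else 0 := by
  intro i a m
  rw [pair_sum]
  show φ (b i ⊗ₜ[A] (a • m)) = _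
  rw [← TensorProduct.smul_tmul, hsmul, TensorProduct.sum_tmul]
  simp only [← TensorProduct.smul_tmul', map_sum, map_smul]
  refine Finset.sum_congr rfl fun j _ => ?_
  rw [ite_smul, zero_smul]
  rfl

end Main2
theorem hs_module_represents (k A C : Type*) [CommRing k] [CommRing A] [CommRing C]
    [Algebra k A] [Algebra k C] (n : ℕ)
    (D : Fin (n + 1) → (A →ₗ[k] C)) (hD : IsHSDeriv k n D)
    (P : Type*) [AddCommGroup P] [Module C P] [Module A P] [SMulCommClass A C P]
    (b : Module.Basis (Fin (n + 1)) C P)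
    (hsmul : ∀ (a : A) (i : Fin (n + 1)),
      a • b i = ∑ j : Fin (n + 1),
        (if (j : ℕ) ≤ (i : ℕ) then
          D ⟨(i : ℕ) - (j : ℕ), Nat.lt_of_le_of_lt (Nat.sub_le _ _) i.isLt⟩ a
        else 0) • b j)
    (M : Type*) [AddCommGroup M] [Module A M] [Module k M] [IsScalarTower k A M] :
    ∃ e : ∀ (N : Type w) [AddCommGroup N] [Module C N] [Module k N] [IsScalarTower k C N],
        {Δ : Fin (n + 1) → (M →ₗ[k] N) //
          ∀ (i : Fin (n + 1)) (a : A) (m : M),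
            Δ i (a • m) =
              ∑ p : Fin (n + 1), ∑ q : Fin (n + 1),
                if (p : ℕ) + (q : ℕ) = (i : ℕ) then D p a • Δ q m else 0} ≃
        (P ⊗[A] M →ₗ[C] N),
      ∀ (N : Type w) [AddCommGroup N] [Module C N] [Module k N] [IsScalarTower k C N]
        (Δ : {Δ : Fin (n + 1) → (M →ₗ[k] N) //
          ∀ (i : Fin (n + 1)) (a : A) (m : M),
            Δ i (a • m) =
              ∑ p : Fin (n + 1), ∑ q : Fin (n + 1),
                if (p : ℕ) + (q : ℕ) = (i : ℕ) then D p a • Δ q m else 0})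
        (j : Fin (n + 1)) (m : M),
        e N Δ (b j ⊗ₜ[A] m) = Δ.1 j m := by
  refine ⟨fun N _ _ _ _ =>
    { toFun := fun Δ => fwd b hsmul Δ.1 Δ.2
      invFun := fun φ => ⟨bwd hD b hsmul φ, bwd_prop hD b hsmul φ⟩
      left_inv := by
        intro Δ
        apply Subtype.ext
        funext j
        apply LinearMap.ext
        intro m
        show fwd b hsmul Δ.1 Δ.2 (b j ⊗ₜ[A] m) = Δ.1 j m
        rw [fwd_tmul, Fbil_basis]
      right_inv := by
        intro φ
        apply LinearMap.ext
        intro x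
        induction x using TensorProduct.induction_on with
        | zero => simp
        | tmul p m =>
            rw [fwd_tmul, Fbil_apply]
            conv_rhs => rw [← b.sum_repr p]
            rw [TensorProduct.sum_tmul]
            simp only [← TensorProduct.smul_tmul', map_sum, map_smul]
            exact Finset.sum_congr rfl fun j _ => rfl
        | add x y hx hy => rw [map_add, map_add, hx, hy] }, ?_⟩
  intro N _ _ _ _ Δ j m
  show fwd b hsmul Δ.1 Δ.2 (b j ⊗ₜ[A] m) = Δ.1 j m
  rw [fwd_tmul, Fbil_basis]
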